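/- Let A = (a_{ij})_{i,j ∈ {3,4,5}} be a 3×3 real matrix with det A ≠ 0 whose entries satisfy the nine relations: a₄₄a₃₃ − a₄₃a₃₄ − a₃₃ = 0, a₅₄a₃₃ − a₅₃a₃₄ − a₄₃ = 0, a₅₄a₄₃ − a₅₃a₄₄ − a₅₃ = 0, a₄₅a₃₃ − a₄₃a₃₅ − a₃₄ = 0, a₅₅a₃₃ − a₅₃a₃₅ − a₄₄ = 0, a₅₅a₄₃ − a₅₄ − a₅₃a₄₅ = 0, a₄₅a₃₄ − a₄₄a₃₅ − a₃₅ = 0, a₅₅a₃₄ − a₅₄a₃₅ − a₄₅ = 0, a₅₅a₄₄ − a₅₅ − a₅₄a₄₅ = 0. If a₃₅ = 0, then a₃₃ ≠ 0 and a₃₄ = 0, a₄₃ = a₅₄a₃₃, a₄₄ = 1, a₄₅ = 0, a₅₃ = (1/2)a₅₄²a₃₃, a₅₅ = a₃₃⁻¹. -/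
import Mathlib


/-- In the automorphism conditions for the Lie algebra `{X₃, X₄, X₅}`, the case
`a₃₅ = 0` forces the stated form of the matrix entries. -/
theorem automorphism_case_a35_eq_zero
    (a₃₃ a₃₄ a₃₅ a₄₃ a₄₄ a₄₅ a₅₃ a₅₄ a₅₅ : ℝ)
    (hdet : Matrix.det !![a₃₃, a₃₄, a₃₅; a₄₃, a₄₄, a₄₅; a₅₃, a₅₄, a₅₅] ≠ 0)
    (e1 : a₄₄ * a₃₃ - a₄₃ * a₃₄ - a₃₃ = 0)
    (e2 : a₅₄ * a₃₃ - a₅₃ * a₃₄ - a₄₃ = 0)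
    (e3 : a₅₄ * a₄₃ - a₅₃ * a₄₄ - a₅₃ = 0)
    (e4 : a₄₅ * a₃₃ - a₄₃ * a₃₅ - a₃₄ = 0)
    (e5 : a₅₅ * a₃₃ - a₅₃ * a₃₅ - a₄₄ = 0)
    (e6 : a₅₅ * a₄₃ - a₅₄ - a₅₃ * a₄₅ = 0)
    (e7 : a₄₅ * a₃₄ - a₄₄ * a₃₅ - a₃₅ = 0)
    (e8 : a₅₅ * a₃₄ - a₅₄ * a₃₅ - a₄₅ = 0)
    (e9 : a₅₅ * a₄₄ - a₅₅ - a₅₄ * a₄₅ = 0)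
    (h35 : a₃₅ = 0) :
    a₃₃ ≠ 0 ∧ a₃₄ = 0 ∧ a₄₃ = a₅₄ * a₃₃ ∧ a₄₄ = 1 ∧ a₄₅ = 0 ∧
      a₅₃ = (1 / 2) * a₅₄ ^ 2 * a₃₃ ∧ a₅₅ = a₃₃⁻¹ := by

  subst h35
  have h34 : a₃₄ = a₄₅ * a₃₃ := by linarith
  have h33 : a₃₃ ≠ 0 := by
    intro h
    apply hdet
    have h34' : a₃₄ = 0 := by rw [h34, h]; ring
    have h45 : a₄₅ = 0 := by
      have := e8; rw [h34'] at this; linarith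
    rw [h, h34', h45]
    simp [Matrix.det_fin_three]
  have h45 : a₄₅ = 0 := by
    have h7 : a₄₅ * (a₄₅ * a₃₃) = 0 := by rw [← h34]; linarith
    rcases mul_eq_zero.mp h7 with h | h
    · exact h
    · rcases mul_eq_zero.mp h with h | h
      · exact h
      · exact absurd h h33
  have h34' : a₃₄ = 0 := by rw [h34, h45]; ring
  have h44 : a₄₄ = 1 := by
    have h0 : (a₄₄ - 1) * a₃₃ = 0 := by rw [h34'] at e1; linarith
    rcases mul_eq_zero.mp h0 with h | h
    · linarith
    · exact absurd h h33
  have h43 : a₄₃ = a₅₄ * a₃₃ := by rw [h34'] at e2; linarith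
  have h55 : a₅₅ = a₃₃⁻¹ := by
    have h5 : a₅₅ * a₃₃ = 1 := by rw [h44] at e5; linarith
    field_simp
    linarith
  have h53 : a₅₃ = (1 / 2) * a₅₄ ^ 2 * a₃₃ := by
    rw [h43, h44] at e3; nlinarith [e3]
  exact ⟨h33, h34', h43, h44, h45, h53, h55⟩
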